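/- arXiv:1409.5843 — 6 statements merged into one kernel-verified Lean document; each statement's English description precedes it below -/
import Mathlib

section
/- For every integer d ≥ 5 there exists a unique t* ∈ (0, (d−1)/2) with Γ(t*) = Γ(d−1−t*) and t* ≠ (d−1)/2; equivalently, there is a unique τ* ∈ (1, d) with Γ((d−τ*)/2) = Γ((d+τ*)/2 − 1). -/
open Real

private lemma gammaAux_mono {x y : ℝ} (hx : 2 ≤ x) (hxy : x ≤ y) :
    Real.Gamma x ≤ Real.Gamma y :=
  Real.Gamma_strictMonoOn_Ici.monotoneOn (Set.mem_Ici.mpr hx)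
    (Set.mem_Ici.mpr (hx.trans hxy)) hxy

private lemma gammaAux_strict {x y : ℝ} (hx : 2 ≤ x) (hxy : x < y) :
    Real.Gamma x < Real.Gamma y :=
  Real.Gamma_strictMonoOn_Ici (Set.mem_Ici.mpr hx) (Set.mem_Ici.mpr (hx.trans hxy.le)) hxy

private lemma gammaAux_le_one {x : ℝ} (h1 : 1 ≤ x) (h2 : x ≤ 2) : Real.Gamma x ≤ 1 := by
  have h := Real.convexOn_Gamma.2 (Set.mem_Ioi.mpr one_pos) (Set.mem_Ioi.mpr two_pos)
      (sub_nonneg.mpr h2) (sub_nonneg.mpr h1) (by ring : (2 - x) + (x - 1) = 1)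
  simp only [smul_eq_mul, Real.Gamma_one, Real.Gamma_two] at h
  have hx : (2 - x) * 1 + (x - 1) * 2 = x := by ring
  rw [hx] at h; linarith

private lemma gammaAux_three : Real.Gamma 3 = 2 := by
  have := Real.Gamma_nat_eq_factorial 2
  norm_num at this
  convert this using 2 <;> norm_num

/-- Any solution of `Γ t = Γ (N - t)` in `(0, N/2)` has `t < 1`. -/
private lemma sol_lt_one {N t : ℝ} (hN : 4 ≤ N) (ht0 : 0 < t) (htc : t < N / 2)
    (heq : Real.Gamma t = Real.Gamma (N - t)) : t < 1 := by
  by_contra h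
  push_neg at h
  have hNt2 : 2 < N - t := by linarith
  rcases le_or_gt t 2 with h2 | h2
  · have hle : Real.Gamma t ≤ 1 := gammaAux_le_one h h2
    have hgt : (1 : ℝ) < Real.Gamma (N - t) := by
      have := gammaAux_strict (le_refl 2) hNt2
      rwa [Real.Gamma_two] at this
    linarith [heq ▸ hgt]
  · have := gammaAux_strict h2.le (by linarith : t < N - t)
    linarith [heq ▸ this]

/-- At a solution in `(0,1)`, `t * Γ(N-1) ≤ 1`. -/
private lemma sol_small {N t : ℝ} (hN : 4 ≤ N) (ht0 : 0 < t) (ht1 : t < 1)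
    (heq : Real.Gamma t = Real.Gamma (N - t)) : t * Real.Gamma (N - 1) ≤ 1 := by
  have h1 : Real.Gamma (t + 1) = t * Real.Gamma (N - t) := by
    rw [Real.Gamma_add_one ht0.ne', heq]
  have h2 : Real.Gamma (N - 1) ≤ Real.Gamma (N - t) := gammaAux_mono (by linarith) (by linarith)
  have h3 : Real.Gamma (t + 1) ≤ 1 := gammaAux_le_one (by linarith) (by linarith)
  nlinarith [Real.Gamma_pos_of_pos (show (0:ℝ) < N - t by linarith)]

private lemma gammaAux_Nm1_ge_two {N : ℝ} (hN : 4 ≤ N) : 2 ≤ Real.Gamma (N - 1) := by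
  have := gammaAux_mono (by norm_num : (2:ℝ) ≤ 3) (by linarith : (3:ℝ) ≤ N - 1)
  rwa [gammaAux_three] at this

/-- Two distinct solutions in `(0,1)` are impossible. -/
private lemma no_two_sols {N s t : ℝ} (hN : 4 ≤ N)
    (hbig : Real.log (3 / 2) + Real.log N < Real.Gamma (N - 1))
    (hs0 : 0 < s) (hst : s < t) (ht1 : t < 1)
    (hseq : Real.Gamma s = Real.Gamma (N - s)) (hteq : Real.Gamma t = Real.Gamma (N - t)) :
    False := by
  have ht0 : 0 < t := hs0.trans hst
  have hG2 : 2 ≤ Real.Gamma (N - 1) := gammaAux_Nm1_ge_two hN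
  have hsm : t * Real.Gamma (N - 1) ≤ 1 := sol_small hN ht0 ht1 hteq
  have hth : t ≤ 1 / 2 := by nlinarith
  -- positivity facts
  have hGs1 : 0 < Real.Gamma (s + 1) := Real.Gamma_pos_of_pos (by linarith)
  have hGt1 : 0 < Real.Gamma (t + 1) := Real.Gamma_pos_of_pos (by linarith)
  have hGNs : 0 < Real.Gamma (N - s) := Real.Gamma_pos_of_pos (by linarith)
  have hGNt : 0 < Real.Gamma (N - t) := Real.Gamma_pos_of_pos (by linarith)
  -- (A)  log Γ(t+1) - log Γ(s+1) ≤ (t-s) * log (3/2)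
  have hA : Real.log (Real.Gamma (t + 1)) - Real.log (Real.Gamma (s + 1)) ≤
      (t - s) * Real.log (3 / 2) := by
    have hsl := Real.convexOn_log_Gamma.slope_mono_adjacent
      (Set.mem_Ioi.mpr (by linarith : (0:ℝ) < s + 1))
      (Set.mem_Ioi.mpr (by linarith : (0:ℝ) < t + 2))
      (by linarith : s + 1 < t + 1) (by linarith : t + 1 < t + 2)
    simp only [Function.comp_apply] at hsl
    rw [show t + 1 - (s + 1) = t - s by ring, show t + 2 - (t + 1) = (1:ℝ) by ring,
      div_one, div_le_iff₀ (by linarith : (0:ℝ) < t - s)] at hsl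
    have h12 : Real.Gamma (t + 2) = (t + 1) * Real.Gamma (t + 1) := by
      have := Real.Gamma_add_one (by linarith : t + 1 ≠ 0)
      rwa [show t + 1 + 1 = t + 2 by ring] at this
    have hlog12 : Real.log (Real.Gamma (t + 2)) - Real.log (Real.Gamma (t + 1)) =
        Real.log (t + 1) := by
      rw [h12, Real.log_mul (by linarith) hGt1.ne']; ring
    rw [hlog12] at hsl
    have hlt : Real.log (t + 1) ≤ Real.log (3 / 2) :=
      Real.log_le_log (by linarith) (by linarith)
    nlinarith
  -- (B)  log Γ(N-s) - log Γ(N-t) ≤ (t-s) * log N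
  have hB : Real.log (Real.Gamma (N - s)) - Real.log (Real.Gamma (N - t)) ≤
      (t - s) * Real.log N := by
    have hsl := Real.convexOn_log_Gamma.slope_mono_adjacent
      (Set.mem_Ioi.mpr (by linarith : (0:ℝ) < N - t))
      (Set.mem_Ioi.mpr (by linarith : (0:ℝ) < N + 1 - s))
      (by linarith : N - t < N - s) (by linarith : N - s < N + 1 - s)
    simp only [Function.comp_apply] at hsl
    rw [show N - s - (N - t) = t - s by ring, show N + 1 - s - (N - s) = (1:ℝ) by ring,
      div_one, div_le_iff₀ (by linarith : (0:ℝ) < t - s)] at hsl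
    have h12 : Real.Gamma (N + 1 - s) = (N - s) * Real.Gamma (N - s) := by
      have := Real.Gamma_add_one (by linarith : N - s ≠ 0)
      rwa [show N - s + 1 = N + 1 - s by ring] at this
    have hlog12 : Real.log (Real.Gamma (N + 1 - s)) - Real.log (Real.Gamma (N - s)) =
        Real.log (N - s) := by
      rw [h12, Real.log_mul (by linarith) hGNs.ne']; ring
    rw [hlog12] at hsl
    have hlt : Real.log (N - s) ≤ Real.log N := Real.log_le_log (by linarith) (by linarith)
    nlinarith
  -- (C)  (t-s)/t ≤ log t - log s
  have hC : (t - s) / t ≤ Real.log t - Real.log s := by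
    have h := Real.log_le_sub_one_of_pos (show (0:ℝ) < s / t by positivity)
    rw [Real.log_div hs0.ne' ht0.ne'] at h
    have : s / t - 1 = -((t - s) / t) := by field_simp; ring
    rw [this] at h
    linarith
  -- equations in log form
  have hes : Real.log (Real.Gamma (s + 1)) = Real.log s + Real.log (Real.Gamma (N - s)) := by
    rw [Real.Gamma_add_one hs0.ne', hseq, Real.log_mul hs0.ne' hGNs.ne']
  have het : Real.log (Real.Gamma (t + 1)) = Real.log t + Real.log (Real.Gamma (N - t)) := by
    rw [Real.Gamma_add_one ht0.ne', hteq, Real.log_mul ht0.ne' hGNt.ne']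
  -- combine
  have hcomb : Real.log t - Real.log s ≤ (t - s) * (Real.log (3 / 2) + Real.log N) := by
    have := hA
    rw [het, hes] at this
    nlinarith
  have hD : (t - s) * Real.Gamma (N - 1) ≤ (t - s) / t := by
    have h1t : Real.Gamma (N - 1) ≤ 1 / t := (le_div_iff₀ ht0).mpr (by nlinarith)
    calc (t - s) * Real.Gamma (N - 1) ≤ (t - s) * (1 / t) := by nlinarith
      _ = (t - s) / t := by ring
  have hfin : (t - s) * Real.Gamma (N - 1) ≤ (t - s) * (Real.log (3 / 2) + Real.log N) :=
    hD.trans (hC.trans hcomb)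
  have := (mul_le_mul_iff_right₀ (by linarith : (0:ℝ) < t - s)).mp hfin
  linarith

/-- The key numeric bound: `log (3/2) + log (d-1) < Γ(d-2) = (d-3)!`. -/
private lemma big_bound (d : ℕ) (hd : 5 ≤ d) :
    Real.log (3 / 2) + Real.log ((d : ℝ) - 1) < Real.Gamma ((d : ℝ) - 2) := by
  set k : ℕ := d - 3 with hk
  have hk2 : 2 ≤ k := by omega
  have hkc : (k : ℝ) = (d : ℝ) - 3 := by
    have : (d : ℝ) = ((k + 3 : ℕ) : ℝ) := by congr 1; omega
    rw [this]; push_cast; ring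
  have hGam : Real.Gamma ((d : ℝ) - 2) = (k.factorial : ℝ) := by
    have := Real.Gamma_nat_eq_factorial k
    rw [show ((k : ℝ) + 1) = (d : ℝ) - 2 by rw [hkc]; ring] at this
    exact this
  have hN : (0 : ℝ) < (d : ℝ) - 1 := by
    have : (5 : ℝ) ≤ (d : ℝ) := by exact_mod_cast hd
    linarith
  have hlog : Real.log (3 / 2) + Real.log ((d : ℝ) - 1) =
      Real.log (3 / 2 * ((d : ℝ) - 1)) := (Real.log_mul (by norm_num) hN.ne').symm
  rw [hlog, hGam]
  rw [Real.log_lt_iff_lt_exp (by positivity)]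
  have hdk : (d : ℝ) - 1 = (k : ℝ) + 2 := by rw [hkc]; ring
  rw [hdk]
  rcases eq_or_lt_of_le hk2 with h2 | h3
  · -- k = 2 : need 6 < exp 2
    have hk2' : k = 2 := h2.symm
    have he : Real.exp (2 : ℝ) = Real.exp 1 * Real.exp 1 := by
      rw [← Real.exp_add]; norm_num
    have := Real.exp_one_gt_d9
    rw [hk2']
    norm_num [he]
    nlinarith
  · -- k ≥ 3 : k! ≥ 2k and exp(2k) ≥ (1+k)²
    have h3' : 3 ≤ k := h3
    have hfac : 2 * k ≤ k.factorial := by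
      have h1 : k - 1 ≤ (k - 1).factorial := Nat.self_le_factorial _
      have h2' : k.factorial = k * (k - 1).factorial := by
        conv_lhs => rw [show k = (k - 1) + 1 by omega]
        rw [Nat.factorial_succ]; congr 1; omega
      calc 2 * k = k * 2 := by ring
        _ ≤ k * (k - 1) := by apply Nat.mul_le_mul_left; omega
        _ ≤ k * (k - 1).factorial := Nat.mul_le_mul_left _ h1
        _ = k.factorial := h2'.symm
    have hfacR : (2 : ℝ) * (k : ℝ) ≤ (k.factorial : ℝ) := by exact_mod_cast hfac
    have hexp1 : Real.exp ((2 : ℝ) * k) ≤ Real.exp (k.factorial : ℝ) :=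
      Real.exp_le_exp.mpr hfacR
    have hexp2 : ((1 : ℝ) + k) ^ 2 ≤ Real.exp ((2 : ℝ) * k) := by
      have h := Real.add_one_le_exp (k : ℝ)
      have hsq : ((1 : ℝ) + k) ^ 2 ≤ (Real.exp (k : ℝ)) ^ 2 := by
        apply pow_le_pow_left₀ (by positivity)
        linarith
      calc ((1 : ℝ) + k) ^ 2 ≤ (Real.exp (k : ℝ)) ^ 2 := hsq
        _ = Real.exp ((2 : ℝ) * k) := by rw [sq, ← Real.exp_add, two_mul]
    have hk3R : (3 : ℝ) ≤ (k : ℝ) := by exact_mod_cast h3'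
    nlinarith [hexp1, hexp2]

/-- Existence of a solution in `(0, 1)`. -/
private lemma exists_sol {N : ℝ} (hN : 4 ≤ N) :
    ∃ t ∈ Set.Ioo (0 : ℝ) 1, Real.Gamma t = Real.Gamma (N - t) := by
  have hGN1 : 1 ≤ Real.Gamma N := by
    have := gammaAux_mono (le_refl 2) (by linarith : (2:ℝ) ≤ N)
    rwa [Real.Gamma_two] at this
  set t0 : ℝ := 1 / (2 * Real.Gamma N) with ht0def
  have hGNpos : 0 < Real.Gamma N := by linarith
  have ht0pos : 0 < t0 := by positivity
  have ht0le : t0 ≤ 1 / 2 := by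
    rw [ht0def, div_le_div_iff₀ (by positivity) (by norm_num)]
    nlinarith
  -- Γ t0 ≥ Γ N
  have hg0 : Real.Gamma N ≤ Real.Gamma t0 := by
    have hA : Real.Gamma (t0 + 2) = (t0 + 1) * (t0 * Real.Gamma t0) := by
      rw [show t0 + 2 = (t0 + 1) + 1 by ring, Real.Gamma_add_one (by linarith),
        Real.Gamma_add_one ht0pos.ne']
    have hB : 1 ≤ Real.Gamma (t0 + 2) := by
      have := gammaAux_mono (le_refl 2) (by linarith : (2:ℝ) ≤ t0 + 2)
      rwa [Real.Gamma_two] at this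
    have hGt0 : 0 < Real.Gamma t0 := Real.Gamma_pos_of_pos ht0pos
    -- 1 ≤ (t0+1) * t0 * Γ t0 ≤ 2 * t0 * Γ t0 = Γ t0 / Γ N... 
    have h2 : 1 ≤ 2 * t0 * Real.Gamma t0 := by nlinarith
    have : 2 * t0 = 1 / Real.Gamma N := by
      rw [ht0def]; field_simp
    rw [this] at h2
    rw [div_mul_eq_mul_div, le_div_iff₀ hGNpos, one_mul] at h2
    linarith
  have hlt : Real.Gamma (N - t0) < Real.Gamma t0 := by
    have := gammaAux_strict (by linarith : (2:ℝ) ≤ N - t0) (by linarith : N - t0 < N)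
    linarith
  have h1 : Real.Gamma (1 : ℝ) < Real.Gamma (N - 1) := by
    rw [Real.Gamma_one]
    have := gammaAux_strict (le_refl 2) (by linarith : (2:ℝ) < N - 1)
    rw [Real.Gamma_two] at this
    linarith
  -- IVT for g t = Γ t - Γ (N - t) on [t0, 1]
  set g : ℝ → ℝ := fun t => Real.Gamma t - Real.Gamma (N - t) with hg
  have hcont : ContinuousOn g (Set.Icc t0 1) := by
    intro x hx
    have hx0 : 0 < x := lt_of_lt_of_le ht0pos hx.1
    have hdx : DifferentiableAt ℝ Real.Gamma x :=
      Real.differentiableAt_Gamma (fun m => by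
        have : (0:ℝ) ≤ m := Nat.cast_nonneg m
        intro hc; rw [hc] at hx0; linarith)
    have hdx2 : DifferentiableAt ℝ Real.Gamma (N - x) :=
      Real.differentiableAt_Gamma (fun m => by
        have h1' : (0:ℝ) ≤ m := Nat.cast_nonneg m
        have h2' : 0 < N - x := by have := hx.2; linarith
        intro hc; rw [hc] at h2'; linarith)
    apply ContinuousWithinAt.sub
    · exact hdx.continuousAt.continuousWithinAt
    · exact ((hdx2.continuousAt).comp
        (by fun_prop : ContinuousAt (fun t : ℝ => N - t) x)).continuousWithinAt
  have hmem : (0 : ℝ) ∈ Set.Ioo (g 1) (g t0) := by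
    constructor
    · simp only [hg]
      linarith
    · simp only [hg]
      linarith
  obtain ⟨c, hc, hgc⟩ := intermediate_value_Ioo' (by linarith : t0 ≤ 1) hcont hmem
  refine ⟨c, ⟨lt_of_lt_of_le ht0pos hc.1.le, hc.2⟩, ?_⟩
  simp only [hg] at hgc
  linarith [hgc]

theorem tau_upper_star_well_defined (d : ℕ) (hd : 5 ≤ d) :
    (∃! t : ℝ, t ∈ Set.Ioo (0 : ℝ) (((d : ℝ) - 1) / 2) ∧
        Real.Gamma t = Real.Gamma ((d : ℝ) - 1 - t)) ∧
    (∃! τ : ℝ, τ ∈ Set.Ioo (1 : ℝ) (d : ℝ) ∧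
        Real.Gamma (((d : ℝ) - τ) / 2) = Real.Gamma (((d : ℝ) + τ) / 2 - 1)) := by
  have hdR : (5 : ℝ) ≤ (d : ℝ) := by exact_mod_cast hd
  have hN : (4 : ℝ) ≤ (d : ℝ) - 1 := by linarith
  have hbig : Real.log (3 / 2) + Real.log ((d : ℝ) - 1) < Real.Gamma ((d : ℝ) - 1 - 1) := by
    rw [show (d : ℝ) - 1 - 1 = (d : ℝ) - 2 by ring]
    exact big_bound d hd
  obtain ⟨t0, ht0, heq0⟩ := exists_sol hN
  have hpart1 : ∃! t : ℝ, t ∈ Set.Ioo (0 : ℝ) (((d : ℝ) - 1) / 2) ∧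
      Real.Gamma t = Real.Gamma ((d : ℝ) - 1 - t) := by
    refine ⟨t0, ⟨⟨ht0.1, by linarith [ht0.2]⟩, heq0⟩, ?_⟩
    rintro y ⟨⟨hy0, hyc⟩, hyeq⟩
    have hy1 : y < 1 := sol_lt_one hN hy0 hyc hyeq
    rcases lt_trichotomy y t0 with h | h | h
    · exact absurd (no_two_sols hN hbig hy0 h ht0.2 hyeq heq0) not_false
    · exact h
    · exact absurd (no_two_sols hN hbig ht0.1 h hy1 heq0 hyeq) not_false
  refine ⟨hpart1, ?_⟩
  obtain ⟨t, ⟨⟨htpos, htlt⟩, hteq⟩, huniq⟩ := hpart1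
  refine ⟨(d : ℝ) - 2 * t, ⟨⟨by linarith, by linarith⟩, ?_⟩, ?_⟩
  · rw [show ((d : ℝ) - ((d : ℝ) - 2 * t)) / 2 = t by ring,
      show ((d : ℝ) + ((d : ℝ) - 2 * t)) / 2 - 1 = (d : ℝ) - 1 - t by ring]
    exact hteq
  · rintro τ ⟨⟨hτ1, hτd⟩, hτeq⟩
    have ht' : ((d : ℝ) - τ) / 2 = t := by
      refine huniq (((d : ℝ) - τ) / 2) ⟨⟨by linarith, by linarith⟩, ?_⟩
      rw [show (d : ℝ) - 1 - (((d : ℝ) - τ) / 2) = ((d : ℝ) + τ) / 2 - 1 by ring]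
      exact hτeq
    linarith
end

section
/- Let d ∈ {2, 3} and τ ∈ (1, d) (for d = 2, τ ∈ (1,2); for d = 3, τ ∈ (1,3)), and define β_k = π·2^{2−τ}·Γ(τ−1)·Γ(k+(d−τ)/2) / (Γ(τ/2)^2·Γ(k+(d+τ)/2−1)) · (1+k(k+d−2))^{(τ−1)/2} for k ∈ ℕ. Then the sequence (β_k) is strictly decreasing. -/
open Real

private lemma sinh_lt_mul_cosh {t : ℝ} (ht : 0 < t) :
    Real.sinh t < t * Real.cosh t := by
  have h : StrictMonoOn (fun x : ℝ => x * Real.cosh x - Real.sinh x) (Set.Ici 0) := by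
    apply strictMonoOn_of_deriv_pos (convex_Ici 0)
    · exact ((continuous_id.mul Real.continuous_cosh).sub Real.continuous_sinh).continuousOn
    · intro x hx
      rw [interior_Ici, Set.mem_Ioi] at hx
      have hd : HasDerivAt (fun x : ℝ => x * Real.cosh x - Real.sinh x)
          (1 * Real.cosh x + x * Real.sinh x - Real.cosh x) x :=
        ((hasDerivAt_id x).mul (Real.hasDerivAt_cosh x)).sub (Real.hasDerivAt_sinh x)
      rw [hd.deriv]
      have hs : 0 < Real.sinh x := Real.sinh_pos_iff.2 hx
      nlinarith [mul_pos hx hs]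
  have h0 := h (Set.self_mem_Ici) (Set.mem_Ici.2 ht.le) ht
  simp only [Real.cosh_zero, Real.sinh_zero, mul_one, zero_mul, sub_zero, zero_sub,
    neg_zero] at h0
  linarith

private lemma log_lb {x : ℝ} (hx : 1 < x) : 2 * (x - 1) / (x + 1) < Real.log x := by
  set t := Real.log x / 2 with htdef
  have hx0 : (0:ℝ) < x := by linarith
  have ht : 0 < t := by
    have := Real.log_pos hx
    rw [htdef]; linarith
  have hs := sinh_lt_mul_cosh ht
  rw [Real.sinh_eq, Real.cosh_eq, Real.exp_neg] at hs
  set E := Real.exp t with hEdef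
  have hE0 : 0 < E := Real.exp_pos t
  have hEE : E * E⁻¹ = 1 := mul_inv_cancel₀ hE0.ne'
  have hx2 : E * E = x := by
    rw [hEdef, ← Real.exp_add]
    rw [show t + t = Real.log x by rw [htdef]; ring]
    exact Real.exp_log hx0
  have hprod := mul_lt_mul_of_pos_left hs hE0
  have h3 : t * (E * E⁻¹) = t := by rw [hEE, mul_one]
  have key2 : E * E - 1 < t * (E * E + 1) := by nlinarith [hprod, hEE, h3]
  rw [div_lt_iff₀ (by linarith : (0:ℝ) < x + 1)]
  have hlog : Real.log x = 2 * t := by rw [htdef]; ring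
  rw [hlog, ← hx2]
  nlinarith [key2]

private lemma log_lb' {u v : ℝ} (hu : 0 < u) (huv : u < v) :
    2 * (v - u) / (u + v) < Real.log (v / u) := by
  have hx : 1 < v / u := (one_lt_div hu).2 huv
  have h := log_lb hx
  have e : 2 * (v / u - 1) / (v / u + 1) = 2 * (v - u) / (u + v) := by
    rw [div_eq_div_iff (by linarith : v / u + 1 ≠ 0) (by linarith : u + v ≠ 0)]
    field_simp
    ring
  rwa [e] at h

private lemma log_ub' {Q Qp : ℝ} (hQ : 0 < Q) (hQp : 0 < Qp) (hle : Q ≤ Qp) :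
    Real.log (Qp / Q) ≤ (Qp * Qp - Q * Q) / (Q * Qp * 2) := by
  have hy : 1 ≤ Qp / Q := (one_le_div hQ).2 hle
  have hy0 : (0:ℝ) < Qp / Q := by positivity
  have h : Real.log (Qp / Q) ≤ Real.sinh (Real.log (Qp / Q)) :=
    Real.self_le_sinh_iff.2 (Real.log_nonneg hy)
  rw [Real.sinh_eq, Real.exp_neg, Real.exp_log hy0] at h
  have e : (Qp / Q - (Qp / Q)⁻¹) / 2 = (Qp * Qp - Q * Q) / (Q * Qp * 2) := by
    rw [inv_div, div_sub_div _ _ hQ.ne' hQp.ne', div_div]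
  rwa [e] at h

private lemma core (τ u v Q Qp : ℝ) (hτ1 : 1 < τ) (hu : 0 < u) (hv : 0 < v) (huv : u < v)
    (hQ : 0 < Q) (hQlt : Q < Qp) (hvu : v - u = τ - 1)
    (hpoly : (u + v) * (Qp ^ 2 - Q ^ 2) ≤ 8 * Q * Qp) :
    π * 2 ^ (2 - τ) * Real.Gamma (τ - 1) * (u * Real.Gamma u) /
        (Real.Gamma (τ / 2) ^ 2 * (v * Real.Gamma v)) * Qp ^ ((τ - 1) / 2)
      < π * 2 ^ (2 - τ) * Real.Gamma (τ - 1) * Real.Gamma u /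
        (Real.Gamma (τ / 2) ^ 2 * Real.Gamma v) * Q ^ ((τ - 1) / 2) := by
  have hQp : 0 < Qp := hQ.trans hQlt
  have hp : 0 < (τ - 1) / 2 := by linarith
  have huvsum : 0 < u + v := by linarith
  -- log comparison
  have lb' : 2 * (τ - 1) / (u + v) < Real.log (v / u) := by
    rw [show (2:ℝ) * (τ - 1) = 2 * (v - u) by rw [hvu]]
    exact log_lb' hu huv
  have ub' := log_ub' hQ hQp hQlt.le
  have main_le : (τ - 1) / 2 * Real.log (Qp / Q) ≤ 2 * (τ - 1) / (u + v) := by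
    have h2 : (τ - 1) / 2 * Real.log (Qp / Q) ≤
        (τ - 1) / 2 * ((Qp * Qp - Q * Q) / (Q * Qp * 2)) :=
      mul_le_mul_of_nonneg_left ub' (by linarith)
    have h3 : (τ - 1) / 2 * ((Qp * Qp - Q * Q) / (Q * Qp * 2)) ≤ 2 * (τ - 1) / (u + v) := by
      rw [div_mul_div_comm, div_le_div_iff₀ (by positivity) huvsum]
      nlinarith [mul_le_mul_of_nonneg_left hpoly (show (0:ℝ) ≤ τ - 1 by linarith)]
    linarith
  have hratio : (Qp / Q) ^ ((τ - 1) / 2) < v / u := by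
    rw [Real.rpow_def_of_pos (div_pos hQp hQ),
      ← Real.exp_log (div_pos hv hu)]
    exact Real.exp_lt_exp.2 (by linarith)
  have hQQp : 0 < Q ^ ((τ - 1) / 2) := Real.rpow_pos_of_pos hQ _
  have h5 : u * (Qp / Q) ^ ((τ - 1) / 2) < v := by
    have h6 := mul_lt_mul_of_pos_left hratio hu
    have huv' : u * (v / u) = v := by field_simp
    rw [huv'] at h6
    exact h6
  have key : u * Qp ^ ((τ - 1) / 2) < v * Q ^ ((τ - 1) / 2) := by
    have e6 : u * Qp ^ ((τ - 1) / 2) = u * (Qp / Q) ^ ((τ - 1) / 2) * Q ^ ((τ - 1) / 2) := by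
      rw [Real.div_rpow hQp.le hQ.le]
      field_simp
    rw [e6]
    exact mul_lt_mul_of_pos_right h5 hQQp
  -- assemble
  have hΓu : 0 < Real.Gamma u := Real.Gamma_pos_of_pos hu
  have hΓv : 0 < Real.Gamma v := Real.Gamma_pos_of_pos hv
  have hΓt1 : 0 < Real.Gamma (τ - 1) := Real.Gamma_pos_of_pos (by linarith)
  have hΓt2 : 0 < Real.Gamma (τ / 2) := Real.Gamma_pos_of_pos (by linarith)
  have hπ : (0:ℝ) < π := Real.pi_pos
  have hpow : (0:ℝ) < (2:ℝ) ^ (2 - τ) := Real.rpow_pos_of_pos (by norm_num) _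
  rw [div_mul_eq_mul_div, div_mul_eq_mul_div,
    div_lt_div_iff₀ (mul_pos (pow_pos hΓt2 2) (mul_pos hv hΓv)) (mul_pos (pow_pos hΓt2 2) hΓv)]
  have hM : 0 < π * 2 ^ (2 - τ) * Real.Gamma (τ - 1) * Real.Gamma u * Real.Gamma v *
      Real.Gamma (τ / 2) ^ 2 :=
    mul_pos (mul_pos (mul_pos (mul_pos (mul_pos hπ hpow) hΓt1) hΓu) hΓv) (pow_pos hΓt2 2)
  nlinarith [mul_lt_mul_of_pos_left key hM]

theorem beta_strictAnti_low_dim (d : ℕ) (hd : d = 2 ∨ d = 3) (τ : ℝ)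
    (hτ : τ ∈ Set.Ioo (1 : ℝ) (d : ℝ)) :
    StrictAnti (fun k : ℕ =>
      π * 2 ^ (2 - τ) * Real.Gamma (τ - 1) * Real.Gamma ((k : ℝ) + ((d : ℝ) - τ) / 2) /
          (Real.Gamma (τ / 2) ^ 2 * Real.Gamma ((k : ℝ) + ((d : ℝ) + τ) / 2 - 1)) *
        (1 + (k : ℝ) * ((k : ℝ) + (d : ℝ) - 2)) ^ ((τ - 1) / 2)) := by
  obtain ⟨hτ1, hτd⟩ := hτ
  have hD : (2:ℝ) ≤ (d : ℝ) := by rcases hd with rfl | rfl <;> norm_num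
  apply strictAnti_nat_of_succ_lt
  intro k
  have hK : (0:ℝ) ≤ (k : ℝ) := Nat.cast_nonneg k
  push_cast
  have hu : (0:ℝ) < (k : ℝ) + ((d : ℝ) - τ) / 2 := by linarith
  have hv : (0:ℝ) < (k : ℝ) + ((d : ℝ) + τ) / 2 - 1 := by linarith
  have e1 : Real.Gamma ((k : ℝ) + 1 + ((d : ℝ) - τ) / 2) =
      ((k : ℝ) + ((d : ℝ) - τ) / 2) * Real.Gamma ((k : ℝ) + ((d : ℝ) - τ) / 2) := by
    rw [show (k : ℝ) + 1 + ((d : ℝ) - τ) / 2 = ((k : ℝ) + ((d : ℝ) - τ) / 2) + 1 by ring,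
      Real.Gamma_add_one hu.ne']
  have e2 : Real.Gamma ((k : ℝ) + 1 + ((d : ℝ) + τ) / 2 - 1) =
      ((k : ℝ) + ((d : ℝ) + τ) / 2 - 1) * Real.Gamma ((k : ℝ) + ((d : ℝ) + τ) / 2 - 1) := by
    rw [show (k : ℝ) + 1 + ((d : ℝ) + τ) / 2 - 1 = ((k : ℝ) + ((d : ℝ) + τ) / 2 - 1) + 1 by ring,
      Real.Gamma_add_one hv.ne']
  rw [e1, e2]
  have hQ : (0:ℝ) < 1 + (k : ℝ) * ((k : ℝ) + (d : ℝ) - 2) := by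
    have := mul_nonneg hK (show (0:ℝ) ≤ (k : ℝ) + (d : ℝ) - 2 by linarith)
    linarith
  have hQlt : 1 + (k : ℝ) * ((k : ℝ) + (d : ℝ) - 2)
      < 1 + ((k : ℝ) + 1) * ((k : ℝ) + 1 + (d : ℝ) - 2) := by nlinarith
  apply core τ _ _ _ _ hτ1 hu hv (by linarith) hQ hQlt (by ring)
  rcases hd with rfl | rfl <;> push_cast <;> nlinarith [sq_nonneg ((k : ℝ)), hK]
end

section
/- Let d ≥ 6 be an integer, set Θ(τ) = ((d+2−τ)/(d+τ))·((2d+1)/d)^{(τ−1)/2}, and let η(d) = d − 1 − sqrt(1+((d−4)/(d−3))(d^2−d+2)). Then for all 0 ≤ η ≤ η(d), Θ(d−η) > 1. -/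
open Real

set_option maxHeartbeats 1000000 in
theorem theta_gt_one (d : ℕ) (hd : 6 ≤ d) (η : ℝ) (hη0 : 0 ≤ η)
    (hη : η ≤ (d : ℝ) - 1 -
      Real.sqrt (1 + (((d : ℝ) - 4) / ((d : ℝ) - 3)) * ((d : ℝ) ^ 2 - (d : ℝ) + 2))) :
    ((d : ℝ) + 2 - ((d : ℝ) - η)) / ((d : ℝ) + ((d : ℝ) - η)) *
      ((2 * (d : ℝ) + 1) / (d : ℝ)) ^ (((d : ℝ) - η - 1) / 2) > 1 := by
  set x : ℝ := (d : ℝ) with hxdef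
  have hx : (6 : ℝ) ≤ x := by rw [hxdef]; exact_mod_cast hd
  have hx0 : (0 : ℝ) < x := by linarith
  have hx3 : (0 : ℝ) < x - 3 := by linarith
  -- Step 1 : η ≤ 0.6
  have hq : ((x - 4) / (x - 3)) * (x ^ 2 - x + 2) * (x - 3) = (x - 4) * (x ^ 2 - x + 2) := by
    field_simp
  have hsq : x - 1.6 ≤ Real.sqrt (1 + ((x - 4) / (x - 3)) * (x ^ 2 - x + 2)) := by
    apply Real.le_sqrt' (by linarith) |>.mpr
    nlinarith [hq, hx3, sq_nonneg (x - 6)]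
  have hη6 : η ≤ 0.6 := by linarith
  -- basic facts about the base b = (2x+1)/x
  set b : ℝ := (2 * x + 1) / x with hbdef
  have hb2 : (2 : ℝ) ≤ b := by rw [hbdef, le_div_iff₀ hx0]; linarith
  have hb0 : (0 : ℝ) < b := by linarith
  have hb13 : b ≤ 13 / 6 := by rw [hbdef, div_le_iff₀ hx0]; linarith
  -- rewrite the goal
  have e1 : x + 2 - (x - η) = 2 + η := by ring
  have e2 : x + (x - η) = 2 * x - η := by ring
  rw [e1, e2]
  have h2x : (0 : ℝ) < 2 * x - η := by linarith
  rw [gt_iff_lt, div_mul_eq_mul_div, lt_div_iff₀ h2x, one_mul]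
  set T : ℝ := b ^ ((x - η - 1) / 2) with hTdef
  set S : ℝ := b ^ (η / 2) with hSdef
  have hT0 : 0 < T := Real.rpow_pos_of_pos hb0 _
  have hS0 : 0 < S := Real.rpow_pos_of_pos hb0 _
  have hTS : T * S = b ^ ((x - 1) / 2) := by
    rw [hTdef, hSdef, ← Real.rpow_add hb0]
    ring_nf
  -- small factor bound : S ≤ 1 + (7/12) η
  have hSle : S ≤ 1 + (7 / 12) * η := by
    have h1 : S ≤ (13 / 6 : ℝ) ^ (η / 2) :=
      Real.rpow_le_rpow (le_of_lt hb0) hb13 (by linarith)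
    have h2 : ((1 : ℝ) + 7 / 6) ^ (η / 2) ≤ 1 + (η / 2) * (7 / 6) :=
      rpow_one_add_le_one_add_mul_self (by norm_num) (by linarith) (by linarith)
    have h3 : ((1 : ℝ) + 7 / 6) = (13 / 6 : ℝ) := by norm_num
    rw [h3] at h2
    linarith
  -- big factor lower bound
  have hBsplit : b = 2 * (1 + 1 / (2 * x)) := by
    rw [hbdef]; field_simp
  have hbig : (29 / 24 : ℝ) * (5.65 * (1 + 0.34655 * (x - 6))) ≤ b ^ ((x - 1) / 2) := by
    have hmul : b ^ ((x - 1) / 2) =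
        (2 : ℝ) ^ ((x - 1) / 2) * (1 + 1 / (2 * x)) ^ ((x - 1) / 2) := by
      rw [hBsplit, Real.mul_rpow (by norm_num) (by positivity)]
    -- Bernoulli for the second factor
    have hP : (29 / 24 : ℝ) ≤ (1 + 1 / (2 * x)) ^ ((x - 1) / 2) := by
      have hnn : (0 : ℝ) ≤ 1 / (2 * x) := by positivity
      have hbern : 1 + ((x - 1) / 2) * (1 / (2 * x)) ≤ (1 + 1 / (2 * x)) ^ ((x - 1) / 2) :=
        one_add_mul_self_le_rpow_one_add (by linarith) (by linarith)
      have : (5 / 24 : ℝ) ≤ ((x - 1) / 2) * (1 / (2 * x)) := by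
        rw [div_mul_div_comm, le_div_iff₀ (by linarith : (0:ℝ) < 2 * (2 * x))]
        nlinarith
      linarith
    -- split 2^((x-1)/2) = 2^(5/2) * 2^((x-6)/2)
    have h2split : (2 : ℝ) ^ ((x - 1) / 2) =
        (2 : ℝ) ^ ((5 : ℝ) / 2) * (2 : ℝ) ^ ((x - 6) / 2) := by
      rw [← Real.rpow_add (by norm_num)]
      ring_nf
    have hc0 : (0 : ℝ) < (2 : ℝ) ^ ((5 : ℝ) / 2) := Real.rpow_pos_of_pos (by norm_num) _
    have hc2 : ((2 : ℝ) ^ ((5 : ℝ) / 2)) ^ (2 : ℕ) = 32 := by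
      rw [← Real.rpow_natCast ((2 : ℝ) ^ ((5 : ℝ) / 2)) 2, ← Real.rpow_mul (by norm_num),
        show ((5 : ℝ) / 2) * ((2 : ℕ) : ℝ) = ((5 : ℕ) : ℝ) by push_cast; ring,
        Real.rpow_natCast]
      norm_num
    have hc : (5.65 : ℝ) ≤ (2 : ℝ) ^ ((5 : ℝ) / 2) := by
      nlinarith [hc2, hc0]
    have hexp : 1 + 0.6931 * ((x - 6) / 2) ≤ (2 : ℝ) ^ ((x - 6) / 2) := by
      rw [Real.rpow_def_of_pos (by norm_num : (0:ℝ) < 2)]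
      have h1 : Real.log 2 * ((x - 6) / 2) + 1 ≤ Real.exp (Real.log 2 * ((x - 6) / 2)) :=
        Real.add_one_le_exp _
      have h2 : 0.6931 * ((x - 6) / 2) ≤ Real.log 2 * ((x - 6) / 2) := by
        apply mul_le_mul_of_nonneg_right _ (by linarith)
        linarith [Real.log_two_gt_d9]
      linarith
    have hexp0 : (0 : ℝ) ≤ 1 + 0.6931 * ((x - 6) / 2) := by nlinarith
    have h2big : 5.65 * (1 + 0.34655 * (x - 6)) ≤ (2 : ℝ) ^ ((x - 1) / 2) := by
      rw [h2split]
      have := mul_le_mul hc hexp hexp0 (le_of_lt hc0)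
      nlinarith [this]
    rw [hmul]
    have h20 : (0 : ℝ) ≤ (2 : ℝ) ^ ((x - 1) / 2) := le_of_lt (Real.rpow_pos_of_pos (by norm_num) _)
    have hP0 : (0 : ℝ) ≤ (29 / 24 : ℝ) := by norm_num
    calc (29 / 24 : ℝ) * (5.65 * (1 + 0.34655 * (x - 6)))
        = (5.65 * (1 + 0.34655 * (x - 6))) * (29 / 24) := by ring
      _ ≤ (2 : ℝ) ^ ((x - 1) / 2) * ((1 + 1 / (2 * x)) ^ ((x - 1) / 2)) := by
          apply mul_le_mul h2big hP (by norm_num) h20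
  -- key polynomial inequality
  have hKey : (2 * x - η) * (1 + (7 / 12) * η) < (2 + η) * (b ^ ((x - 1) / 2)) := by
    have hge : (2 + η) * ((29 / 24 : ℝ) * (5.65 * (1 + 0.34655 * (x - 6)))) ≤
        (2 + η) * (b ^ ((x - 1) / 2)) :=
      mul_le_mul_of_nonneg_left hbig (by linarith)
    nlinarith [mul_nonneg hη0 (by linarith : (0:ℝ) ≤ x - 6), hη0, hη6]
  -- conclude
  have h1 : (2 * x - η) * S ≤ (2 * x - η) * (1 + (7 / 12) * η) :=
    mul_le_mul_of_nonneg_left hSle (by linarith)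
  have h2 : (2 * x - η) * S < ((2 + η) * T) * S := by
    have : ((2 + η) * T) * S = (2 + η) * (T * S) := by ring
    rw [this, hTS]
    linarith
  exact lt_of_mul_lt_mul_right h2 hS0.le
end

section
/- Let d = 5 and τ ∈ (τ_*, 5), where τ_* ∈ (1,5) satisfies 5^{(τ_*−1)/2}(5−τ_*)/2 = (3+τ_*)/2. Then the unique positive real k(τ) satisfying ((2k+5−τ)/(2k+3+τ))·((1+(k+1)(k+4))/(1+k(k+3)))^{(τ−1)/2} = 1 satisfies k(τ) ≤ −2 + sqrt((5−τ(2−τ))/((5−τ)(3+τ))); in particular k(τ) ≤ C_2/(5−τ)^{1/2} for some constant C_2 > 0. -/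
open Real Filter

private lemma k_tau_key (τ : ℝ) (hτ1 : 1 < τ) (hτ5 : τ < 5) (k : ℝ) (hk : 0 < k)
    (heq : (2 * k + 5 - τ) / (2 * k + 3 + τ) *
        ((1 + (k + 1) * (k + 4)) / (1 + k * (k + 3))) ^ ((τ - 1) / 2) = 1) :
    k ≤ -2 + Real.sqrt ((5 - τ * (2 - τ)) / ((5 - τ) * (3 + τ))) := by
  rw [show (1 + (k + 1) * (k + 4)) = k ^ 2 + 5 * k + 5 by ring,
    show (1 + k * (k + 3)) = k ^ 2 + 3 * k + 1 by ring] at heq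
  by_contra hcon
  push_neg at hcon
  set g : ℝ → ℝ := fun y => Real.log (2 * y + 5 - τ) - Real.log (2 * y + 3 + τ)
      + (τ - 1) / 2 * (Real.log (y ^ 2 + 5 * y + 5) - Real.log (y ^ 2 + 3 * y + 1)) with hgdef
  have hDn : (0:ℝ) < (5 - τ) * (3 + τ) := by nlinarith
  -- from hcon : -2 + sqrt (...) < k we get (k+2)^2 * ((5-τ)*(3+τ)) > 5 - τ*(2-τ)
  have hsq : 5 - τ * (2 - τ) < (k + 2) ^ 2 * ((5 - τ) * (3 + τ)) := by
    have h1 : Real.sqrt ((5 - τ * (2 - τ)) / ((5 - τ) * (3 + τ))) < k + 2 := by linarith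
    have h2 : (5 - τ * (2 - τ)) / ((5 - τ) * (3 + τ)) < (k + 2) ^ 2 :=
      (Real.sqrt_lt' (by linarith)).mp h1
    calc 5 - τ * (2 - τ) = (5 - τ * (2 - τ)) / ((5 - τ) * (3 + τ)) * ((5 - τ) * (3 + τ)) := by
          rw [div_mul_cancel₀ _ hDn.ne']
      _ < (k + 2) ^ 2 * ((5 - τ) * (3 + τ)) := by
          exact mul_lt_mul_of_pos_right h2 hDn
  -- derivative of g
  have hder : ∀ y : ℝ, 0 < y → HasDerivAt g
      (2 / (2 * y + 5 - τ) - 2 / (2 * y + 3 + τ)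
        + (τ - 1) / 2 * ((2 * y + 5) / (y ^ 2 + 5 * y + 5) - (2 * y + 3) / (y ^ 2 + 3 * y + 1))) y := by
    intro y hy0
    have hL1 : (0:ℝ) < 2 * y + 5 - τ := by linarith
    have hL2 : (0:ℝ) < 2 * y + 3 + τ := by linarith
    have hQ1 : (0:ℝ) < y ^ 2 + 5 * y + 5 := by positivity
    have hQ2 : (0:ℝ) < y ^ 2 + 3 * y + 1 := by positivity
    have d1 : HasDerivAt (fun y : ℝ => 2 * y + 5 - τ) 2 y := by
      simpa using (((hasDerivAt_id y).const_mul (2:ℝ)).add_const 5).sub_const τ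
    have d2 : HasDerivAt (fun y : ℝ => 2 * y + 3 + τ) 2 y := by
      simpa using (((hasDerivAt_id y).const_mul (2:ℝ)).add_const 3).add_const τ
    have d3 : HasDerivAt (fun y : ℝ => y ^ 2 + 5 * y + 5) (2 * y + 5) y := by
      simpa using ((hasDerivAt_pow 2 y).add ((hasDerivAt_id y).const_mul (5:ℝ))).add_const 5
    have d4 : HasDerivAt (fun y : ℝ => y ^ 2 + 3 * y + 1) (2 * y + 3) y := by
      simpa using ((hasDerivAt_pow 2 y).add ((hasDerivAt_id y).const_mul (3:ℝ))).add_const 1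
    have l1 := d1.log hL1.ne'
    have l2 := d2.log hL2.ne'
    have l3 := d3.log hQ1.ne'
    have l4 := d4.log hQ2.ne'
    exact (l1.sub l2).add ((l3.sub l4).const_mul ((τ - 1) / 2))
  -- the derivative is negative for y ≥ k
  have hdneg : ∀ y : ℝ, k ≤ y →
      2 / (2 * y + 5 - τ) - 2 / (2 * y + 3 + τ)
        + (τ - 1) / 2 * ((2 * y + 5) / (y ^ 2 + 5 * y + 5) - (2 * y + 3) / (y ^ 2 + 3 * y + 1)) < 0 := by
    intro y hy
    have hy0 : 0 < y := lt_of_lt_of_le hk hy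
    have hL1 : (0:ℝ) < 2 * y + 5 - τ := by linarith
    have hL2 : (0:ℝ) < 2 * y + 3 + τ := by linarith
    have hQ1 : (0:ℝ) < y ^ 2 + 5 * y + 5 := by positivity
    have hQ2 : (0:ℝ) < y ^ 2 + 3 * y + 1 := by positivity
    have hyk : (k + 2) ^ 2 ≤ (y + 2) ^ 2 := by nlinarith
    have hvy : 5 - τ * (2 - τ) < (y + 2) ^ 2 * ((5 - τ) * (3 + τ)) := by
      calc 5 - τ * (2 - τ) < (k + 2) ^ 2 * ((5 - τ) * (3 + τ)) := hsq
        _ ≤ (y + 2) ^ 2 * ((5 - τ) * (3 + τ)) := mul_le_mul_of_nonneg_right hyk hDn.le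
    have e : 2 / (2 * y + 5 - τ) - 2 / (2 * y + 3 + τ)
        + (τ - 1) / 2 * ((2 * y + 5) / (y ^ 2 + 5 * y + 5) - (2 * y + 3) / (y ^ 2 + 3 * y + 1))
        = (τ - 1) * (4 / ((2 * y + 5 - τ) * (2 * y + 3 + τ))
            - (y ^ 2 + 4 * y + 5) / ((y ^ 2 + 5 * y + 5) * (y ^ 2 + 3 * y + 1))) := by
      field_simp
      ring
    rw [e]
    apply mul_neg_of_pos_of_neg (by linarith)
    rw [sub_neg, div_lt_div_iff₀ (by positivity) (by positivity)]
    nlinarith [hvy]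
  -- g tends to 0 at infinity
  have hlim : Tendsto g atTop (nhds 0) := by
    have hA : Tendsto (fun y : ℝ => Real.log (2 * y + 5 - τ) - Real.log (2 * y + 3 + τ))
        atTop (nhds 0) := by
      have h1 : Tendsto (fun y : ℝ => (2 * y + 5 - τ) / (2 * y + 3 + τ)) atTop (nhds 1) := by
        have heq' : ∀ᶠ y : ℝ in atTop,
            (2 + (5 - τ) / y) / (2 + (3 + τ) / y) = (2 * y + 5 - τ) / (2 * y + 3 + τ) := by
          filter_upwards [eventually_gt_atTop (0:ℝ)] with y hy
          rw [div_eq_div_iff (by positivity) (by nlinarith)]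
          field_simp
          ring
        rw [← tendsto_congr' heq']
        have hz1 : Tendsto (fun y : ℝ => (5 - τ) / y) atTop (nhds 0) :=
          Tendsto.div_atTop tendsto_const_nhds tendsto_id
        have hz2 : Tendsto (fun y : ℝ => (3 + τ) / y) atTop (nhds 0) :=
          Tendsto.div_atTop tendsto_const_nhds tendsto_id
        have hn : Tendsto (fun y : ℝ => 2 + (5 - τ) / y) atTop (nhds 2) := by
          simpa only [add_zero] using hz1.const_add 2
        have hd : Tendsto (fun y : ℝ => 2 + (3 + τ) / y) atTop (nhds 2) := by
          simpa only [add_zero] using hz2.const_add 2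
        have h := hn.div hd two_ne_zero
        norm_num at h
        exact h
      have h2 := ((Real.continuousAt_log one_ne_zero).tendsto).comp h1
      rw [Real.log_one] at h2
      apply h2.congr'
      filter_upwards [eventually_gt_atTop (0:ℝ)] with y hy
      have hL1 : (0:ℝ) < 2 * y + 5 - τ := by linarith
      have hL2 : (0:ℝ) < 2 * y + 3 + τ := by linarith
      simp only [Function.comp_apply]
      rw [Real.log_div hL1.ne' hL2.ne']
    have hB : Tendsto (fun y : ℝ => Real.log (y ^ 2 + 5 * y + 5) - Real.log (y ^ 2 + 3 * y + 1))
        atTop (nhds 0) := by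
      have h1 : Tendsto (fun y : ℝ => (y ^ 2 + 5 * y + 5) / (y ^ 2 + 3 * y + 1)) atTop (nhds 1) := by
        have heq' : ∀ᶠ y : ℝ in atTop,
            (1 + 5 / y + 5 / y ^ 2) / (1 + 3 / y + 1 / y ^ 2)
              = (y ^ 2 + 5 * y + 5) / (y ^ 2 + 3 * y + 1) := by
          filter_upwards [eventually_gt_atTop (0:ℝ)] with y hy
          rw [div_eq_div_iff (by positivity) (by positivity)]
          field_simp
        rw [← tendsto_congr' heq']
        have hy2 : Tendsto (fun y : ℝ => y ^ 2) atTop atTop := tendsto_pow_atTop two_ne_zero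
        have hz1 : Tendsto (fun y : ℝ => (5:ℝ) / y) atTop (nhds 0) :=
          Tendsto.div_atTop tendsto_const_nhds tendsto_id
        have hz1' : Tendsto (fun y : ℝ => (5:ℝ) / y ^ 2) atTop (nhds 0) :=
          Tendsto.div_atTop tendsto_const_nhds hy2
        have hz2 : Tendsto (fun y : ℝ => (3:ℝ) / y) atTop (nhds 0) :=
          Tendsto.div_atTop tendsto_const_nhds tendsto_id
        have hz2' : Tendsto (fun y : ℝ => (1:ℝ) / y ^ 2) atTop (nhds 0) :=
          Tendsto.div_atTop tendsto_const_nhds hy2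
        have hn : Tendsto (fun y : ℝ => 1 + 5 / y + 5 / y ^ 2) atTop (nhds 1) := by
          simpa only [add_zero] using (hz1.const_add 1).add hz1'
        have hd : Tendsto (fun y : ℝ => 1 + 3 / y + 1 / y ^ 2) atTop (nhds 1) := by
          simpa only [add_zero] using (hz2.const_add 1).add hz2'
        simpa only [one_div_one, Pi.div_def] using hn.div hd one_ne_zero
      have h2 := ((Real.continuousAt_log one_ne_zero).tendsto).comp h1
      rw [Real.log_one] at h2
      apply h2.congr'
      filter_upwards [eventually_gt_atTop (0:ℝ)] with y hy
      have hQ1 : (0:ℝ) < y ^ 2 + 5 * y + 5 := by positivity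
      have hQ2 : (0:ℝ) < y ^ 2 + 3 * y + 1 := by positivity
      simp only [Function.comp_apply]
      rw [Real.log_div hQ1.ne' hQ2.ne']
    have := hA.add (hB.const_mul ((τ - 1) / 2))
    simpa using this
  -- g is strictly decreasing on [k, ∞)
  have hanti : StrictAntiOn g (Set.Ici k) := by
    apply strictAntiOn_of_deriv_neg (convex_Ici k)
    · intro y hy
      exact (hder y (lt_of_lt_of_le hk hy)).continuousAt.continuousWithinAt
    · intro y hy
      rw [interior_Ici] at hy
      rw [(hder y (lt_trans hk hy)).deriv]
      exact hdneg y hy.le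
  -- hence g k > 0
  have hgk1 : (0:ℝ) ≤ g (k + 1) := by
    apply le_of_tendsto hlim
    filter_upwards [eventually_ge_atTop (k + 1)] with y hy
    rcases eq_or_lt_of_le hy with h | h
    · rw [← h]
    · exact (hanti (Set.mem_Ici.mpr (by linarith)) (Set.mem_Ici.mpr (by linarith)) h).le
  have hgk : 0 < g k := by
    have := hanti (Set.mem_Ici.mpr le_rfl) (Set.mem_Ici.mpr (by linarith)) (by linarith : k < k + 1)
    linarith
  -- but g k = 0 from the equation
  have hL1 : (0:ℝ) < 2 * k + 5 - τ := by linarith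
  have hL2 : (0:ℝ) < 2 * k + 3 + τ := by linarith
  have hQ1 : (0:ℝ) < k ^ 2 + 5 * k + 5 := by positivity
  have hQ2 : (0:ℝ) < k ^ 2 + 3 * k + 1 := by positivity
  have hAq : (0:ℝ) < (2 * k + 5 - τ) / (2 * k + 3 + τ) := by positivity
  have hBq : (0:ℝ) < (k ^ 2 + 5 * k + 5) / (k ^ 2 + 3 * k + 1) := by positivity
  have hBr : (0:ℝ) < ((k ^ 2 + 5 * k + 5) / (k ^ 2 + 3 * k + 1)) ^ ((τ - 1) / 2) :=
    Real.rpow_pos_of_pos hBq _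
  have hlogeq := congrArg Real.log heq
  rw [Real.log_one, Real.log_mul hAq.ne' hBr.ne', Real.log_rpow hBq,
    Real.log_div hL1.ne' hL2.ne', Real.log_div hQ1.ne' hQ2.ne'] at hlogeq
  have hgk0 : g k = 0 := by
    have hb : g k = Real.log (2 * k + 5 - τ) - Real.log (2 * k + 3 + τ)
        + (τ - 1) / 2 * (Real.log (k ^ 2 + 5 * k + 5) - Real.log (k ^ 2 + 3 * k + 1)) := rfl
    rw [hb]
    linarith
  linarith

theorem k_tau_upper_bound (τstar : ℝ) (hτstar : τstar ∈ Set.Ioo (1 : ℝ) 5)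
    (hτstareq : (5 : ℝ) ^ ((τstar - 1) / 2) * ((5 - τstar) / 2) = (3 + τstar) / 2) :
    (∀ τ ∈ Set.Ioo τstar (5 : ℝ), ∀ k : ℝ, 0 < k →
        (2 * k + 5 - τ) / (2 * k + 3 + τ) *
            ((1 + (k + 1) * (k + 4)) / (1 + k * (k + 3))) ^ ((τ - 1) / 2) = 1 →
        k ≤ -2 + Real.sqrt ((5 - τ * (2 - τ)) / ((5 - τ) * (3 + τ)))) ∧
    ∃ C₂ : ℝ, 0 < C₂ ∧ ∀ τ ∈ Set.Ioo τstar (5 : ℝ), ∀ k : ℝ, 0 < k →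
        (2 * k + 5 - τ) / (2 * k + 3 + τ) *
            ((1 + (k + 1) * (k + 4)) / (1 + k * (k + 3))) ^ ((τ - 1) / 2) = 1 →
        k ≤ C₂ / (5 - τ) ^ ((1 : ℝ) / 2) := by
  obtain ⟨hτs1, hτs5⟩ := hτstar
  constructor
  · intro τ hτ k hk heq
    exact k_tau_key τ (lt_trans hτs1 hτ.1) hτ.2 k hk heq
  · refine ⟨3, by norm_num, ?_⟩
    intro τ hτ k hk heq
    have hτ1 : 1 < τ := lt_trans hτs1 hτ.1
    have hτ5 : τ < 5 := hτ.2
    have h5τ : (0:ℝ) < 5 - τ := by linarith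
    have h1 := k_tau_key τ hτ1 hτ5 k hk heq
    have h2 : Real.sqrt ((5 - τ * (2 - τ)) / ((5 - τ) * (3 + τ))) ≤ Real.sqrt (9 / (5 - τ)) := by
      apply Real.sqrt_le_sqrt
      rw [div_le_div_iff₀ (by nlinarith) h5τ]
      nlinarith [mul_nonneg h5τ.le (show (0:ℝ) ≤ 9 * (3 + τ) - ((τ - 1) ^ 2 + 4) by nlinarith)]
    have h3 : Real.sqrt (9 / (5 - τ)) = 3 / (5 - τ) ^ ((1:ℝ) / 2) := by
      rw [Real.sqrt_div (by norm_num : (0:ℝ) ≤ 9), ← Real.sqrt_eq_rpow,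
        show (9:ℝ) = 3 ^ 2 by norm_num, Real.sqrt_sq (by norm_num : (0:ℝ) ≤ 3)]
    linarith [h2.trans_eq h3, h1]
end

section
/- Let d = 5 and 0 < ε < 1. For every k ∈ ℕ, h(k, 5−2ε) ≤ h(k,5) + ε·(2(k+2)/(k+3)^2)·((k^2+5k+5)/(k^2+3k+1))^2, where h(k,τ) = ((2k+5−τ)/(2k+3+τ))·((1+(k+1)(k+4))/(1+k(k+3)))^{(τ−1)/2}. -/
open Real

theorem h_mean_value_bound :
    ∀ k : ℕ, ∀ ε : ℝ, 0 < ε → ε < 1 →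
      (2 * (k : ℝ) + 5 - (5 - 2 * ε)) / (2 * (k : ℝ) + 3 + (5 - 2 * ε)) *
          ((1 + ((k : ℝ) + 1) * ((k : ℝ) + 4)) / (1 + (k : ℝ) * ((k : ℝ) + 3))) ^
            (((5 - 2 * ε) - 1) / 2) ≤
        (2 * (k : ℝ) + 5 - 5) / (2 * (k : ℝ) + 3 + 5) *
            ((1 + ((k : ℝ) + 1) * ((k : ℝ) + 4)) / (1 + (k : ℝ) * ((k : ℝ) + 3))) ^
              (((5 : ℝ) - 1) / 2) +
          ε * (2 * ((k : ℝ) + 2) / ((k : ℝ) + 3) ^ 2) *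
            (((k : ℝ) ^ 2 + 5 * (k : ℝ) + 5) / ((k : ℝ) ^ 2 + 3 * (k : ℝ) + 1)) ^ 2 := by
  intro k ε hε0 hε1
  set x : ℝ := (k : ℝ) with hxdef
  have hx : (0:ℝ) ≤ x := Nat.cast_nonneg k
  set R : ℝ := (1 + (x + 1) * (x + 4)) / (1 + x * (x + 3)) with hR
  have hden : (0:ℝ) < 1 + x * (x + 3) := by nlinarith
  have hR1 : (1:ℝ) ≤ R := by
    rw [hR, le_div_iff₀ hden]; nlinarith
  have hR0 : (0:ℝ) < R := lt_of_lt_of_le one_pos hR1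
  -- rpow monotonicity
  have hexp : R ^ (((5 - 2*ε) - 1)/2) ≤ R ^ (((5:ℝ) - 1)/2) :=
    Real.rpow_le_rpow_of_exponent_le hR1 (by linarith)
  have hrpow2 : R ^ (((5:ℝ) - 1)/2) = R ^ (2:ℕ) := by
    rw [show ((5:ℝ) - 1)/2 = ((2:ℕ):ℝ) by norm_num, Real.rpow_natCast]
  have hRsq : ((x ^ 2 + 5 * x + 5) / (x ^ 2 + 3 * x + 1)) ^ (2:ℕ) = R ^ (2:ℕ) := by
    rw [hR]; ring_nf
  have hAnn : (0:ℝ) ≤ (2*x + 5 - (5 - 2*ε)) / (2*x + 3 + (5 - 2*ε)) := by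
    apply div_nonneg <;> nlinarith
  -- coefficient inequality
  have hd1 : (0:ℝ) < 2*x + 3 + (5 - 2*ε) := by nlinarith
  have hd2 : (0:ℝ) < 2*x + 3 + 5 := by nlinarith
  have hd3 : (0:ℝ) < (x + 3)^2 := by positivity
  have hcoef : (2*x + 5 - (5 - 2*ε)) / (2*x + 3 + (5 - 2*ε)) ≤
      (2*x + 5 - 5) / (2*x + 3 + 5) + ε * (2 * (x + 2) / (x + 3)^2) := by
    rw [show ε * (2 * (x + 2) / (x + 3)^2) = (ε * (2 * (x + 2))) / (x + 3)^2 by ring,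
      div_add_div _ _ hd2.ne' hd3.ne', div_le_div_iff₀ hd1 (by positivity)]
    nlinarith [mul_nonneg (mul_nonneg (mul_nonneg hε0.le (by linarith : (0:ℝ) ≤ x+2)) (by linarith : (0:ℝ) ≤ 1-ε)) (by linarith : (0:ℝ) ≤ x+4),
      mul_nonneg (mul_nonneg hε0.le (by linarith : (0:ℝ) ≤ x+2)) (by linarith : (0:ℝ) ≤ x+3),
      mul_nonneg (mul_nonneg (mul_nonneg (mul_nonneg hε0.le (by linarith : (0:ℝ) ≤ x+2)) (by linarith : (0:ℝ) ≤ 1-ε)) (by linarith : (0:ℝ) ≤ x+4)) hx,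
      mul_nonneg (mul_nonneg (mul_nonneg hε0.le (by linarith : (0:ℝ) ≤ x+2)) (by linarith : (0:ℝ) ≤ x+3)) hx]
  calc (2*x + 5 - (5 - 2*ε)) / (2*x + 3 + (5 - 2*ε)) * R ^ (((5 - 2*ε) - 1)/2)
      ≤ (2*x + 5 - (5 - 2*ε)) / (2*x + 3 + (5 - 2*ε)) * R ^ (((5:ℝ) - 1)/2) := by
        exact mul_le_mul_of_nonneg_left hexp hAnn
    _ ≤ ((2*x + 5 - 5) / (2*x + 3 + 5) + ε * (2 * (x + 2) / (x + 3)^2)) * R ^ (((5:ℝ) - 1)/2) := by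
        apply mul_le_mul_of_nonneg_right hcoef (Real.rpow_nonneg hR0.le _)
    _ = (2*x + 5 - 5) / (2*x + 3 + 5) * R ^ (((5:ℝ) - 1)/2) +
          ε * (2 * (x + 2) / (x + 3)^2) * ((x ^ 2 + 5 * x + 5) / (x ^ 2 + 3 * x + 1)) ^ (2:ℕ) := by
        rw [hRsq, ← hrpow2]; ring
end

section
/- Let d ≥ 2, τ ∈ (1,d), and define, for θ(ρ) = ρ^{(τ−1)/4}, β_k = π·2^{2−τ}·Γ(τ−1)·Γ(k+(d−τ)/2)/(Γ(τ/2)^2·Γ(k+(d+τ)/2−1))·(k(k+d−2))^{(τ−1)/2}. Then (β_k)_{k∈ℕ} is strictly increasing with β_0 = 0 and lim_{k→∞} β_k = π·2^{2−τ}·Γ(τ−1)/Γ(τ/2)^2; in particular sup_k β_k = π·2^{2−τ}·Γ(τ−1)/Γ(τ/2)^2 is not attained. -/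
open Real Filter Topology
set_option maxHeartbeats 800000

private lemma div_linear_tendsto (c c' : ℝ) :
    Tendsto (fun x : ℝ => (x + c) / (x + c')) atTop (𝓝 1) := by
  have h2 : Tendsto (fun x : ℝ => 1 + (c - c') / (x + c')) atTop (𝓝 (1 + 0)) :=
    tendsto_const_nhds.add (tendsto_const_nhds.div_atTop
      (tendsto_atTop_add_const_right _ c' tendsto_id))
  rw [add_zero] at h2
  refine h2.congr' ?_
  filter_upwards [eventually_gt_atTop (-c')] with x hx
  have h : x + c' ≠ 0 := by linarith
  field_simp
  ring

private lemma log_ratio_tendsto (c c' : ℝ) :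
    Tendsto (fun x : ℝ => Real.log (x + c) - Real.log (x + c')) atTop (𝓝 0) := by
  have h3 : Tendsto Real.log (𝓝 1) (𝓝 0) := by
    simpa using (Real.continuousAt_log one_ne_zero).tendsto
  refine (h3.comp (div_linear_tendsto c c')).congr' ?_
  filter_upwards [eventually_gt_atTop (-c'), eventually_gt_atTop (-c)] with x h1x h2x
  simp only [Function.comp_apply]
  rw [Real.log_div (by linarith) (by linarith)]

private lemma G_pos (D τ : ℝ) (hcase : D = 2 ∨ 3 ≤ D) (hD : 2 ≤ D) (hτ1 : 1 < τ) (hτD : τ < D)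
    {x : ℝ} (hx : 0 < x) :
    0 < Real.log (x + (D - τ)/2) - Real.log (x + ((D + τ)/2 - 1))
      + ((τ-1)/2) * (Real.log (x+1) + Real.log (x+(D-1)) - Real.log x - Real.log (x+(D-2))) := by
  obtain ⟨A, hAdef⟩ : ∃ A : ℝ, A = (D - τ)/2 := ⟨_, rfl⟩
  obtain ⟨B, hBdef⟩ : ∃ B : ℝ, B = (D + τ)/2 - 1 := ⟨_, rfl⟩
  rw [← hAdef, ← hBdef]
  have hA : 0 < A := by rw [hAdef]; linarith
  have hB : 0 < B := by rw [hBdef]; linarith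
  have hBA : B = A + (τ - 1) := by rw [hAdef, hBdef]; ring
  set G : ℝ → ℝ := fun y => Real.log (y + A) - Real.log (y + B)
      + ((τ-1)/2) * (Real.log (y+1) + Real.log (y+(D-1)) - Real.log y - Real.log (y+(D-2)))
    with hGdef
  have hM : 0 < 3*(D-2)^2 + (2-τ)*τ := by
    rcases hcase with h | h
    · subst h; nlinarith
    · nlinarith [mul_pos (by linarith : (0:ℝ) < τ) (sub_pos.2 hτD),
        mul_nonneg (by linarith : (0:ℝ) ≤ D-2) (by linarith : (0:ℝ) ≤ D-3)]
  have hderiv : ∀ y ∈ Set.Ioi (0:ℝ), HasDerivAt G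
      ((y+A)⁻¹ - (y+B)⁻¹ + ((τ-1)/2) * ((y+1)⁻¹ + (y+(D-1))⁻¹ - y⁻¹ - (y+(D-2))⁻¹)) y := by
    intro y hy
    have hy0 : (0:ℝ) < y := hy
    have l : ∀ c : ℝ, 0 < y + c → HasDerivAt (fun z : ℝ => Real.log (z + c)) (y + c)⁻¹ y := by
      intro c hc
      simpa using ((hasDerivAt_id y).add_const c).log (ne_of_gt hc)
    have h1 := l A (by linarith)
    have h2 := l B (by linarith)
    have h3 := l 1 (by linarith)
    have h4 := l (D-1) (by linarith)
    have h5 : HasDerivAt Real.log y⁻¹ y := Real.hasDerivAt_log (ne_of_gt hy0)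
    have h6 := l (D-2) (by linarith)
    exact (h1.sub h2).add ((((h3.add h4).sub h5).sub h6).const_mul ((τ-1)/2))
  have hderivneg : ∀ y ∈ Set.Ioi (0:ℝ),
      (y+A)⁻¹ - (y+B)⁻¹ + ((τ-1)/2) * ((y+1)⁻¹ + (y+(D-1))⁻¹ - y⁻¹ - (y+(D-2))⁻¹) < 0 := by
    intro y hy
    have hy0 : (0:ℝ) < y := hy
    have hP : (0:ℝ) < y*(y+1) := by nlinarith
    have hQ : (0:ℝ) < (y+(D-2))*(y+(D-1)) := by nlinarith
    have hyA : (0:ℝ) < y + A := by linarith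
    have hyB : (0:ℝ) < y + B := by linarith
    have hy1 : (0:ℝ) < y + 1 := by linarith
    have hyD1 : (0:ℝ) < y + (D-1) := by linarith
    have hyD2 : (0:ℝ) < y + (D-2) := by linarith
    have key : 2*(y*(y+1))*((y+(D-2))*(y+(D-1)))
        < ((y+A)*(y+B)) * (y*(y+1) + (y+(D-2))*(y+(D-1))) := by
      have expand : ((y+A)*(y+B)) * (y*(y+1) + (y+(D-2))*(y+(D-1)))
          - 2*(y*(y+1))*((y+(D-2))*(y+(D-1)))
          = ((D-1)*(D-2)*((D-2+τ)*(D-τ)) + 2*(D-1)*(3*(D-2)^2+(2-τ)*τ)*y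
            + 2*(3*(D-2)^2+(2-τ)*τ)*y^2)/4 := by
        rw [hAdef, hBdef]; ring
      have h0 : 0 ≤ (D-1)*(D-2)*((D-2+τ)*(D-τ)) := by
        apply mul_nonneg (mul_nonneg (by linarith) (by linarith))
        exact le_of_lt (mul_pos (by linarith) (by linarith))
      linarith [expand, h0, mul_pos (mul_pos (by linarith : (0:ℝ) < 2*(D-1)) hM) hy0,
        mul_pos (mul_pos two_pos hM) (mul_pos hy0 hy0)]
    have e1 : (y+A)⁻¹ - (y+B)⁻¹ = (τ-1) * (((y+A)*(y+B))⁻¹) := by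
      rw [hBA]
      have h1 : y + A ≠ 0 := hyA.ne'
      have h2 : y + (A + (τ-1)) ≠ 0 := by rw [hBA] at hyB; linarith [hyB]; 
      field_simp
      ring
    have e2 : (y+1)⁻¹ - y⁻¹ = -((y*(y+1))⁻¹) := by
      field_simp
      ring
    have e3 : (y+(D-1))⁻¹ - (y+(D-2))⁻¹ = -(((y+(D-2))*(y+(D-1)))⁻¹) := by
      have h1 : y + (D-1) ≠ 0 := hyD1.ne'
      have h2 : y + (D-2) ≠ 0 := hyD2.ne'
      field_simp
      ring
    have hrw : (y+A)⁻¹ - (y+B)⁻¹ + ((τ-1)/2) * ((y+1)⁻¹ + (y+(D-1))⁻¹ - y⁻¹ - (y+(D-2))⁻¹)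
        = (τ-1) * (((y+A)*(y+B))⁻¹)
          + ((τ-1)/2) * (-((y*(y+1))⁻¹) + -(((y+(D-2))*(y+(D-1)))⁻¹)) := by
      rw [← e1, ← e2, ← e3]; ring
    rw [hrw]
    have h7 : ((y+A)*(y+B))⁻¹ < ((y*(y+1))⁻¹ + (((y+(D-2))*(y+(D-1)))⁻¹))/2 := by
      rw [inv_eq_one_div, inv_eq_one_div, inv_eq_one_div,
        div_add_div _ _ hP.ne' hQ.ne', div_div, div_lt_div_iff₀ (mul_pos hyA hyB) (by positivity)]
      nlinarith [key]
    linarith [mul_lt_mul_of_pos_left h7 (show (0:ℝ) < τ-1 by linarith)]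
  -- strict antitonicity on (0, ∞)
  have anti : StrictAntiOn G (Set.Ioi (0:ℝ)) := by
    refine strictAntiOn_of_deriv_neg (convex_Ioi 0) ?_ ?_
    · intro y hy
      exact (hderiv y hy).continuousAt.continuousWithinAt
    · rw [interior_Ioi]
      intro y hy
      rw [(hderiv y hy).deriv]
      exact hderivneg y hy
  -- G tends to 0 at infinity
  have tendG : Tendsto G atTop (𝓝 0) := by
    have t1 := log_ratio_tendsto A B
    have t2 := log_ratio_tendsto 1 0
    have t3 := log_ratio_tendsto (D-1) (D-2)
    have comb := t1.add ((t2.add t3).const_mul ((τ-1)/2))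
    rw [show (0:ℝ) + ((τ-1)/2) * (0 + 0) = 0 by ring] at comb
    refine comb.congr ?_
    intro y
    rw [hGdef]
    simp only [add_zero]
    ring
  -- every value of G on (0,∞) is nonnegative
  have nonneg : ∀ y : ℝ, 0 < y → 0 ≤ G y := by
    intro y hy
    refine le_of_tendsto tendG ?_
    filter_upwards [eventually_ge_atTop y, eventually_gt_atTop (0:ℝ)] with z hz hz0
    exact anti.antitoneOn (Set.mem_Ioi.2 hy) (Set.mem_Ioi.2 hz0) hz
  have hfin : 0 ≤ G (x + 1) := nonneg (x+1) (by linarith)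
  have := anti (Set.mem_Ioi.2 hx) (Set.mem_Ioi.2 (show (0:ℝ) < x + 1 by linarith))
    (by linarith : x < x + 1)
  exact hfin.trans_lt this


private lemma wendel_base {s : ℝ} (hs : 0 < s) (hs1 : s < 1) :
    Tendsto (fun x : ℝ => Real.Gamma (x + s) / (Real.Gamma x * x ^ s)) atTop (𝓝 1) := by
  have hlow : Tendsto (fun x : ℝ => (x / (x + s)) ^ (1 - s)) atTop (𝓝 1) := by
    have h1 : Tendsto (fun x : ℝ => x / (x + s)) atTop (𝓝 1) := by
      have := div_linear_tendsto 0 s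
      simpa using this
    have h2 : ContinuousAt (fun y : ℝ => y ^ (1-s)) 1 :=
      Real.continuousAt_rpow_const 1 (1-s) (Or.inl one_ne_zero)
    have := h2.tendsto.comp h1
    rw [Real.one_rpow] at this
    exact this
  refine tendsto_of_tendsto_of_tendsto_of_le_of_le' hlow tendsto_const_nhds ?_ ?_
  · -- lower bound
    filter_upwards [eventually_gt_atTop (0:ℝ)] with x hx
    have hΓx : 0 < Real.Gamma x := Real.Gamma_pos_of_pos hx
    have hxs : 0 < x + s := by linarith
    have hΓxs : 0 < Real.Gamma (x + s) := Real.Gamma_pos_of_pos hxs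
    have hcomb : Real.Gamma (x+1) ≤ Real.Gamma (x+s) ^ s * Real.Gamma (x+s+1) ^ (1-s) := by
      have := Real.Gamma_mul_add_mul_le_rpow_Gamma_mul_rpow_Gamma hxs
        (show (0:ℝ) < x+s+1 by linarith) hs (by linarith : (0:ℝ) < 1-s) (by ring)
      rw [show s*(x+s) + (1-s)*(x+s+1) = x+1 by ring] at this
      exact this
    rw [Real.Gamma_add_one hxs.ne'] at hcomb
    rw [Real.Gamma_add_one hx.ne'] at hcomb
    have hgg : Real.Gamma (x+s) ^ s * Real.Gamma (x+s) ^ (1-s) = Real.Gamma (x+s) := by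
      rw [← Real.rpow_add hΓxs]; norm_num
    have hrw : Real.Gamma (x+s) ^ s * ((x+s) * Real.Gamma (x+s)) ^ (1-s)
        = Real.Gamma (x+s) * (x+s) ^ (1-s) := by
      rw [Real.mul_rpow hxs.le hΓxs.le]
      linear_combination (x+s) ^ (1-s) * hgg
    rw [hrw] at hcomb
    -- hcomb : x * Γ x ≤ Γ(x+s) * (x+s)^(1-s)
    rw [Real.div_rpow hx.le hxs.le, div_le_div_iff₀ (by positivity) (by positivity)]
    have hxx : x ^ (1-s) * x ^ s = x := by
      rw [← Real.rpow_add hx]; norm_num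
    calc x ^ (1-s) * (Real.Gamma x * x ^ s) = x * Real.Gamma x := by
          linear_combination Real.Gamma x * hxx
      _ ≤ Real.Gamma (x+s) * (x+s) ^ (1-s) := hcomb
  · -- upper bound
    filter_upwards [eventually_gt_atTop (0:ℝ)] with x hx
    have hΓx : 0 < Real.Gamma x := Real.Gamma_pos_of_pos hx
    have hxs : 0 < x + s := by linarith
    have hup : Real.Gamma (x+s) ≤ Real.Gamma x * x ^ s := by
      have := Real.Gamma_mul_add_mul_le_rpow_Gamma_mul_rpow_Gamma hx
        (show (0:ℝ) < x+1 by linarith) (by linarith : (0:ℝ) < 1-s) hs (by ring)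
      rw [show (1-s)*x + s*(x+1) = x+s by ring] at this
      rw [Real.Gamma_add_one hx.ne'] at this
      have hgg : Real.Gamma x ^ (1-s) * Real.Gamma x ^ s = Real.Gamma x := by
        rw [← Real.rpow_add hΓx]; norm_num
      calc Real.Gamma (x+s) ≤ Real.Gamma x ^ (1-s) * (x * Real.Gamma x) ^ s := this
        _ = Real.Gamma x * x ^ s := by
            rw [Real.mul_rpow hx.le hΓx.le]
            linear_combination x ^ s * hgg
    rw [div_le_one (by positivity)]
    exact hup

private lemma wendel {s : ℝ} (hs : 0 < s) :
    Tendsto (fun x : ℝ => Real.Gamma (x + s) / (Real.Gamma x * x ^ s)) atTop (𝓝 1) := by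
  obtain ⟨n, hn⟩ := exists_nat_ge s
  induction n generalizing s with
  | zero => exact absurd (hs.trans_le hn) (by norm_num)
  | succ n ih =>
    rcases lt_trichotomy s 1 with h1 | h1 | h1
    · exact wendel_base hs h1
    · subst h1
      refine tendsto_const_nhds.congr' ?_
      filter_upwards [eventually_gt_atTop (0:ℝ)] with x hx
      have hΓx : 0 < Real.Gamma x := Real.Gamma_pos_of_pos hx
      rw [Real.Gamma_add_one hx.ne', Real.rpow_one]
      field_simp
    · have hs' : 0 < s - 1 := by linarith
      have hn' : s - 1 ≤ (n : ℕ) := by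
        push_cast at hn ⊢; linarith
      have hrat : Tendsto (fun x : ℝ => (x + (s-1)) / x) atTop (𝓝 1) := by
        have := div_linear_tendsto (s-1) 0
        simpa using this
      have := (ih hs' hn').mul hrat
      rw [mul_one] at this
      refine this.congr' ?_
      filter_upwards [eventually_gt_atTop (0:ℝ)] with x hx
      have hΓx : 0 < Real.Gamma x := Real.Gamma_pos_of_pos hx
      have hxs1 : (0:ℝ) < x + (s-1) := by linarith
      have hΓ2 : 0 < Real.Gamma (x + (s-1)) := Real.Gamma_pos_of_pos hxs1
      have hxp : (0:ℝ) < x ^ (s-1) := Real.rpow_pos_of_pos hx _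
      rw [show x + s = (x + (s-1)) + 1 by ring, Real.Gamma_add_one hxs1.ne',
        show s = (s-1) + 1 by ring, Real.rpow_add hx, Real.rpow_one]
      field_simp
      ring


theorem beta_homogeneous_theta (d : ℕ) (hd : 2 ≤ d) (τ : ℝ) (hτ : τ ∈ Set.Ioo (1 : ℝ) (d : ℝ)) :
    let β : ℕ → ℝ := fun k =>
      π * 2 ^ (2 - τ) * Real.Gamma (τ - 1) * Real.Gamma ((k : ℝ) + ((d : ℝ) - τ) / 2) /
          (Real.Gamma (τ / 2) ^ 2 * Real.Gamma ((k : ℝ) + ((d : ℝ) + τ) / 2 - 1)) *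
        ((k : ℝ) * ((k : ℝ) + (d : ℝ) - 2)) ^ ((τ - 1) / 2)
    StrictMono β ∧ β 0 = 0 ∧
      Tendsto β atTop (nhds (π * 2 ^ (2 - τ) * Real.Gamma (τ - 1) / Real.Gamma (τ / 2) ^ 2)) ∧
      (∀ k : ℕ, β k < π * 2 ^ (2 - τ) * Real.Gamma (τ - 1) / Real.Gamma (τ / 2) ^ 2) ∧
      (⨆ k : ℕ, β k) = π * 2 ^ (2 - τ) * Real.Gamma (τ - 1) / Real.Gamma (τ / 2) ^ 2 := by
  intro β
  obtain ⟨hτ1, hτD⟩ := hτ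
  have hD : (2:ℝ) ≤ (d:ℝ) := by exact_mod_cast hd
  have hcase : (d:ℝ) = 2 ∨ (3:ℝ) ≤ (d:ℝ) := by
    rcases eq_or_lt_of_le hd with h | h
    · left; exact_mod_cast h.symm
    · right; exact_mod_cast h
  have hs : (0:ℝ) < τ - 1 := by linarith
  have hA : (0:ℝ) < ((d:ℝ) - τ) / 2 := by linarith
  have hB : (0:ℝ) < ((d:ℝ) + τ) / 2 - 1 := by linarith
  have hΓτ1 : 0 < Real.Gamma (τ - 1) := Real.Gamma_pos_of_pos hs
  have hΓτ2 : 0 < Real.Gamma (τ / 2) := Real.Gamma_pos_of_pos (by linarith)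
  have h2τ : (0:ℝ) < 2 ^ (2 - τ) := Real.rpow_pos_of_pos two_pos _
  have hC0 : 0 < π * 2 ^ (2 - τ) * Real.Gamma (τ - 1) / Real.Gamma (τ / 2) ^ 2 := by
    have := Real.pi_pos; positivity
  have hΓA : ∀ k : ℕ, 0 < Real.Gamma ((k : ℝ) + ((d : ℝ) - τ) / 2) := fun k =>
    Real.Gamma_pos_of_pos (by positivity)
  have hΓB : ∀ k : ℕ, 0 < Real.Gamma ((k : ℝ) + ((d : ℝ) + τ) / 2 - 1) := fun k =>
    Real.Gamma_pos_of_pos (by have : (0:ℝ) ≤ (k:ℝ) := Nat.cast_nonneg k; linarith)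
  have hβ : ∀ k : ℕ, β k =
      (π * 2 ^ (2 - τ) * Real.Gamma (τ - 1) / Real.Gamma (τ / 2) ^ 2) *
        (Real.Gamma ((k : ℝ) + ((d : ℝ) - τ) / 2) /
          Real.Gamma ((k : ℝ) + ((d : ℝ) + τ) / 2 - 1)) *
        ((k : ℝ) * ((k : ℝ) + (d : ℝ) - 2)) ^ ((τ - 1) / 2) := by
    intro k
    simp only [β]
    rw [div_mul_div_comm, div_mul_eq_mul_div]
  have hβ0 : β 0 = 0 := by
    simp only [β, Nat.cast_zero, zero_mul]
    rw [Real.zero_rpow (by positivity : (τ-1)/2 ≠ 0), mul_zero]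
  -- positivity of β k for k ≥ 1
  have hβpos : ∀ k : ℕ, 1 ≤ k → 0 < β k := by
    intro k hk
    have hk1 : (1:ℝ) ≤ (k:ℝ) := by exact_mod_cast hk
    rw [hβ k]
    have hbase : (0:ℝ) < (k : ℝ) * ((k : ℝ) + (d : ℝ) - 2) := by nlinarith
    have := hΓA k; have := hΓB k
    positivity
  -- step inequality
  have hstep : ∀ k : ℕ, 1 ≤ k → β k < β (k + 1) := by
    intro k hk
    have hk1 : (1:ℝ) ≤ (k:ℝ) := by exact_mod_cast hk
    set x : ℝ := (k:ℝ) with hxdef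
    have hx : (0:ℝ) < x := by linarith
    have hG := G_pos (d:ℝ) τ hcase hD hτ1 hτD hx
    have hx1 : (0:ℝ) < x + 1 := by linarith
    have hxD1 : (0:ℝ) < x + ((d:ℝ)-1) := by linarith
    have hxD2 : (0:ℝ) < x + ((d:ℝ)-2) := by linarith
    have hbase : (0:ℝ) < x * (x + ((d:ℝ)-2)) := by positivity
    have hr : (0:ℝ) < ((x+1) * (x+((d:ℝ)-1))) / (x * (x+((d:ℝ)-2))) := by positivity
    have hlogr : Real.log (x+1) + Real.log (x+((d:ℝ)-1)) - Real.log x - Real.log (x+((d:ℝ)-2))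
        = Real.log (((x+1) * (x+((d:ℝ)-1))) / (x * (x+((d:ℝ)-2)))) := by
      rw [Real.log_div (by positivity) (by positivity),
        Real.log_mul hx1.ne' hxD1.ne', Real.log_mul hx.ne' hxD2.ne']
      ring
    rw [hlogr] at hG
    have hgt : 1 < (x + ((d:ℝ) - τ)/2) / (x + (((d:ℝ) + τ)/2 - 1)) *
        (((x+1) * (x+((d:ℝ)-1))) / (x * (x+((d:ℝ)-2)))) ^ ((τ-1)/2) := by
      have h1 := Real.exp_lt_exp.2 hG
      rw [Real.exp_zero, Real.exp_add, Real.exp_sub,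
        Real.exp_log (by linarith : (0:ℝ) < x + ((d:ℝ) - τ)/2),
        Real.exp_log (by linarith : (0:ℝ) < x + (((d:ℝ) + τ)/2 - 1)),
        mul_comm ((τ-1)/2), ← Real.rpow_def_of_pos hr] at h1
      exact h1
    have hmul : β (k+1) = β k *
        ((x + ((d:ℝ) - τ)/2) / (x + (((d:ℝ) + τ)/2 - 1)) *
          (((x+1) * (x+((d:ℝ)-1))) / (x * (x+((d:ℝ)-2)))) ^ ((τ-1)/2)) := by
      rw [hβ k, hβ (k+1)]
      push_cast
      rw [show x + 1 + ((d:ℝ) - τ)/2 = (x + ((d:ℝ) - τ)/2) + 1 by ring,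
        Real.Gamma_add_one (by linarith : x + ((d:ℝ) - τ)/2 ≠ 0),
        show x + 1 + ((d:ℝ) + τ)/2 - 1 = (x + ((d:ℝ) + τ)/2 - 1) + 1 by ring,
        Real.Gamma_add_one (by have := hΓB k; nlinarith [hB] : x + ((d:ℝ) + τ)/2 - 1 ≠ 0)]
      rw [show (x + 1) * (x + 1 + (d:ℝ) - 2)
          = (x * (x + ((d:ℝ)-2))) * (((x+1) * (x+((d:ℝ)-1))) / (x * (x+((d:ℝ)-2)))) by
        rw [mul_comm (x * (x + ((d:ℝ)-2))), div_mul_cancel₀ _ hbase.ne']; ring]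
      rw [Real.mul_rpow hbase.le hr.le]
      have e1 : Real.Gamma (x + ((d:ℝ) + τ)/2 - 1) ≠ 0 := by
        have : 0 < Real.Gamma (x + ((d:ℝ) + τ)/2 - 1) :=
          Real.Gamma_pos_of_pos (by linarith)
        exact this.ne'
      have e2 : Real.Gamma (τ/2) ≠ 0 := hΓτ2.ne'
      have e3 : x + ((d:ℝ) + τ)/2 - 1 ≠ 0 := by linarith
      have e4 : x + (d:ℝ) - 2 = x + ((d:ℝ) - 2) := by ring
      rw [e4]
      rw [← hxdef]
      field_simp
      ring
    rw [hmul]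
    exact lt_mul_of_one_lt_right (hβpos k hk) hgt
  have hmono : StrictMono β := by
    apply strictMono_nat_of_lt_succ
    intro k
    rcases Nat.eq_zero_or_pos k with h | h
    · subst h
      rw [hβ0]
      exact hβpos 1 le_rfl
    · exact hstep k h
  -- the limit
  have htend : Tendsto β atTop
      (𝓝 (π * 2 ^ (2 - τ) * Real.Gamma (τ - 1) / Real.Gamma (τ / 2) ^ 2)) := by
    have hW := wendel hs
    have hcomp : Tendsto (fun k : ℕ => (k:ℝ) + ((d:ℝ) - τ)/2) atTop atTop :=
      tendsto_atTop_add_const_right _ _ tendsto_natCast_atTop_atTop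
    have W1 := hW.comp hcomp
    have hratio2 : Tendsto (fun k : ℕ =>
        ((k:ℝ) * ((k:ℝ) + (d:ℝ) - 2)) / ((k:ℝ) + ((d:ℝ) - τ)/2) ^ 2) atTop (𝓝 1) := by
      have t := ((div_linear_tendsto 0 (((d:ℝ) - τ)/2)).mul
        (div_linear_tendsto ((d:ℝ)-2) (((d:ℝ) - τ)/2))).comp
        (tendsto_natCast_atTop_atTop (R := ℝ))
      rw [mul_one] at t
      refine t.congr ?_
      intro k
      have hkA : (0:ℝ) < (k:ℝ) + ((d:ℝ) - τ)/2 := by positivity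
      simp only [Function.comp_apply]
      field_simp
      ring
    have hpow : Tendsto (fun k : ℕ =>
        (((k:ℝ) * ((k:ℝ) + (d:ℝ) - 2)) / ((k:ℝ) + ((d:ℝ) - τ)/2) ^ 2) ^ ((τ-1)/2))
        atTop (𝓝 1) := by
      have hc : ContinuousAt (fun y : ℝ => y ^ ((τ-1)/2)) 1 :=
        Real.continuousAt_rpow_const 1 _ (Or.inl one_ne_zero)
      have := hc.tendsto.comp hratio2
      rw [Real.one_rpow] at this
      exact this
    have hmain := ((W1.inv₀ one_ne_zero).mul hpow).const_mul
      (π * 2 ^ (2 - τ) * Real.Gamma (τ - 1) / Real.Gamma (τ / 2) ^ 2)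
    norm_num at hmain
    refine hmain.congr' ?_
    filter_upwards [eventually_ge_atTop 1] with k hk
    have hk1 : (1:ℝ) ≤ (k:ℝ) := by exact_mod_cast hk
    have hkA : (0:ℝ) < (k:ℝ) + ((d:ℝ) - τ)/2 := by positivity
    have hbase : (0:ℝ) ≤ (k:ℝ) * ((k:ℝ) + (d:ℝ) - 2) := by nlinarith
    have hP : (0:ℝ) < ((k:ℝ) + ((d:ℝ) - τ)/2) ^ (τ-1) := Real.rpow_pos_of_pos hkA _
    have hΓAk := hΓA k
    have hΓBk := hΓB k
    try simp only [Function.comp_apply]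
    rw [Real.div_rpow hbase (by positivity), ← Real.rpow_natCast ((k:ℝ) + ((d:ℝ) - τ)/2) 2,
      ← Real.rpow_mul hkA.le, show ((2:ℕ):ℝ) * ((τ-1)/2) = τ - 1 by push_cast; ring,
      show (k:ℝ) + ((d:ℝ) - τ)/2 + (τ - 1) = (k:ℝ) + ((d:ℝ) + τ)/2 - 1 by ring,
      hβ k]
    have hPP : ((k:ℝ)+((d:ℝ)-τ)/2) ^ (τ-1) * ((((k:ℝ)+((d:ℝ)-τ)/2) ^ (τ-1))⁻¹) = 1 :=
      mul_inv_cancel₀ hP.ne'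
    linear_combination (π * 2 ^ (2 - τ) * Real.Gamma (τ - 1) / Real.Gamma (τ / 2) ^ 2 *
      Real.Gamma ((k:ℝ)+((d:ℝ)-τ)/2) * ((k:ℝ) * ((k:ℝ) + (d:ℝ) - 2)) ^ ((τ-1)/2) /
      Real.Gamma ((k:ℝ)+((d:ℝ)+τ)/2-1)) * hPP
  refine ⟨hmono, hβ0, htend, ?_, ?_⟩
  · intro k
    have h1 : β (k+1) ≤ π * 2 ^ (2 - τ) * Real.Gamma (τ - 1) / Real.Gamma (τ / 2) ^ 2 :=
      hmono.monotone.ge_of_tendsto htend (k+1)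
    exact lt_of_lt_of_le (hmono (Nat.lt_succ_self k)) h1
  · exact (isLUB_of_tendsto_atTop hmono.monotone htend).ciSup_eq
end
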